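/- Define E(x,y) = xy(1−x)(1−y)/(1−xy) for (x,y) ∈ (0,1)². Then E is invariant under the Gauss recurrence: E(G(x,y)) = E(x,y) for all (x,y) ∈ (0,1)², where G(x,y) = (y, (1−x)/(1−xy)). E is also invariant under the swap (x,y) ↦ (y,x). -/

import Mathlib

/-- The energy `E(x,y) = xy(1−x)(1−y)/(1−xy)` on `(0,1)²` is invariant under the Gauss
recurrence `G(x,y) = (y, (1−x)/(1−xy))` and under the coordinate swap. -/
theorem energy_gauss_invariant
    (E : ℝ → ℝ → ℝ) (hE : ∀ x y : ℝ, E x y = x * y * (1 - x) * (1 - y) / (1 - x * y)) :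
    ∀ x y : ℝ, x ∈ Set.Ioo (0 : ℝ) 1 → y ∈ Set.Ioo (0 : ℝ) 1 →
      E y ((1 - x) / (1 - x * y)) = E x y ∧ E y x = E x y := by
  intro x y hx hy
  obtain ⟨hx0, hx1⟩ := hx
  obtain ⟨hy0, hy1⟩ := hy
  have hxy : (0:ℝ) < 1 - x * y := by nlinarith
  have hxy' : (1:ℝ) - x * y ≠ 0 := ne_of_gt hxy
  have h2 : (1:ℝ) - y * x ≠ 0 := by rwa [mul_comm]
  have hden : (1:ℝ) - y * ((1 - x) / (1 - x * y)) = (1 - y) / (1 - x * y) := by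
    field_simp
    ring
  constructor
  · rw [hE, hE, hden]
    rw [div_eq_div_iff (div_pos (by linarith) hxy).ne' hxy']
    field_simp
    ring
  · rw [hE, hE]
    rw [show y * x = x * y by ring]
    ring_nf
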